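/- Irregular emergent subjective prior example: the single-player game with uncertainty with action set 𝒜_1 = {U, D}, parameter set Θ = {L, C, R}, and utility matrix U_1 = [[1,0,0],[0,0,1]] (rows indexed by actions U, D and columns by states L, C, R) has a unique extended equilibrium, given by σ*_1 = (1/2, 1/2) and π*_1 = (1/2, 0, 1/2); in particular the equilibrium prior assigns probability zero to the state C. -/

import Mathlib

open Finset

noncomputable section

/-- A probability distribution on a finite type. -/
def IsDist {α : Type*} [Fintype α] (p : α → ℝ) : Prop :=
  (∀ x, 0 ≤ p x) ∧ ∑ x, p x = 1

variable {N : ℕ} {A : Fin N → Type*} [∀ j, Fintype (A j)] [∀ j, Nonempty (A j)]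
  {Θ : Type*} [Fintype Θ] [Nonempty Θ]

/-- `Π(a|σ) = ∏ⱼ σⱼ(aⱼ)`. -/
def piProb (σ : ∀ j : Fin N, A j → ℝ) (a : ∀ j : Fin N, A j) : ℝ := ∏ j, σ j (a j)

/-- Effective utility matrix `EUᵢ(aᵢ;θ|σ)`. -/
def EUmat (U : ∀ i : Fin N, (∀ j : Fin N, A j) → Θ → ℝ) (σ : ∀ j : Fin N, A j → ℝ)
    (i : Fin N) (ai : A i) (θ : Θ) : ℝ :=
  ∑ b : ∀ j : Fin N, A j, U i (Function.update b i ai) θ * piProb σ b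

/-- Effective regret matrix `ERᵢ(aᵢ;θ|σ)`. -/
def ERmat (U : ∀ i : Fin N, (∀ j : Fin N, A j) → Θ → ℝ) (σ : ∀ j : Fin N, A j → ℝ)
    (i : Fin N) (ai : A i) (θ : Θ) : ℝ :=
  (Finset.univ.sup' Finset.univ_nonempty fun ci : A i => EUmat U σ i ci θ) - EUmat U σ i ai θ

/-- Expected utility of action `aᵢ`: `EUᵢ(aᵢ|σ;π)`. -/
def EUact (U : ∀ i : Fin N, (∀ j : Fin N, A j) → Θ → ℝ) (σ : ∀ j : Fin N, A j → ℝ) (π : Fin N → Θ → ℝ)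
    (i : Fin N) (ai : A i) : ℝ :=
  ∑ θ, EUmat U σ i ai θ * π i θ

/-- Expected utility `EUᵢ(σ;π)`. -/
def EUtot (U : ∀ i : Fin N, (∀ j : Fin N, A j) → Θ → ℝ) (σ : ∀ j : Fin N, A j → ℝ) (π : Fin N → Θ → ℝ)
    (i : Fin N) : ℝ :=
  ∑ ai, EUact U σ π i ai * σ i ai

/-- Expected regret at parameter `θ`: `ERᵢ(θ|σ;π)`. -/
def ERparam (U : ∀ i : Fin N, (∀ j : Fin N, A j) → Θ → ℝ) (σ : ∀ j : Fin N, A j → ℝ)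
    (i : Fin N) (θ : Θ) : ℝ :=
  ∑ ai, ERmat U σ i ai θ * σ i ai

/-- Expected regret `ERᵢ(σ;π)`. -/
def ERtot (U : ∀ i : Fin N, (∀ j : Fin N, A j) → Θ → ℝ) (σ : ∀ j : Fin N, A j → ℝ) (π : Fin N → Θ → ℝ)
    (i : Fin N) : ℝ :=
  ∑ θ, ERparam U σ i θ * π i θ

/-- Extended equilibrium conditions. -/
def ExtendedEquilibrium (U : ∀ i : Fin N, (∀ j : Fin N, A j) → Θ → ℝ)
    (σ : ∀ j : Fin N, A j → ℝ) (π : Fin N → Θ → ℝ) : Prop :=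
  (∀ i, ∀ ai : A i, EUtot U σ π i ≥ EUact U σ π i ai) ∧
  (∀ i, ∀ θ : Θ, ERtot U σ π i ≥ ERparam U σ i θ)

/-- φ_{i,aᵢ}(σ;π). -/
def phi (U : ∀ i : Fin N, (∀ j : Fin N, A j) → Θ → ℝ) (σ : ∀ j : Fin N, A j → ℝ) (π : Fin N → Θ → ℝ)
    (i : Fin N) (ai : A i) : ℝ :=
  max 0 (EUact U σ π i ai - EUtot U σ π i)

/-- ψ_{i,θ}(σ;π). -/
def psi (U : ∀ i : Fin N, (∀ j : Fin N, A j) → Θ → ℝ) (σ : ∀ j : Fin N, A j → ℝ) (π : Fin N → Θ → ℝ)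
    (i : Fin N) (θ : Θ) : ℝ :=
  max 0 (ERparam U σ i θ - ERtot U σ π i)

/-- Real-strategy part of the auxiliary map `Υ`. -/
def nextStrat (U : ∀ i : Fin N, (∀ j : Fin N, A j) → Θ → ℝ) (σ : ∀ j : Fin N, A j → ℝ) (π : Fin N → Θ → ℝ)
    (i : Fin N) (ai : A i) : ℝ :=
  (σ i ai + phi U σ π i ai) / (1 + ∑ bi, phi U σ π i bi)

/-- Prior part of the auxiliary map `Υ`. -/
def nextPrior (U : ∀ i : Fin N, (∀ j : Fin N, A j) → Θ → ℝ) (σ : ∀ j : Fin N, A j → ℝ) (π : Fin N → Θ → ℝ)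
    (i : Fin N) (θ : Θ) : ℝ :=
  (π i θ + psi U σ π i θ) / (1 + ∑ χ, psi U σ π i χ)

/-- The auxiliary map `Υ`. -/
def Upsilon (U : ∀ i : Fin N, (∀ j : Fin N, A j) → Θ → ℝ)
    (ρ : (∀ i, A i → ℝ) × (Fin N → Θ → ℝ)) : (∀ i, A i → ℝ) × (Fin N → Θ → ℝ) :=
  (fun i => nextStrat U ρ.1 ρ.2 i, fun i => nextPrior U ρ.1 ρ.2 i)

/-- The single-player game with an irregular emergent subjective prior: utility matrix
`[[1,0,0],[0,0,1]]`, rows indexed by the actions `U`, `D`, columns by states `L`, `C`, `R`. -/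
def IrrU : ∀ _ : Fin 1, (∀ _ : Fin 1, Fin 2) → Fin 3 → ℝ := fun _ a θ =>
  !![(1:ℝ), 0, 0; 0, 0, 1] (a 0) θ

/-- The equilibrium strategy `σ*₁ = (1/2, 1/2)`. -/
def Irrσ : ∀ _ : Fin 1, Fin 2 → ℝ := fun _ => ![1 / 2, 1 / 2]

/-- The emergent subjective equilibrium prior `π*₁ = (1/2, 0, 1/2)`. -/
def Irrπ : Fin 1 → Fin 3 → ℝ := fun _ => ![1 / 2, 0, 1 / 2]

section IrrAux

lemma irr_sum_pi12 (g : (∀ _ : Fin 1, Fin 2) → ℝ) :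
    ∑ b : ∀ _ : Fin 1, Fin 2, g b = g (fun _ => 0) + g (fun _ => 1) := by
  rw [← Fintype.sum_equiv (Equiv.funUnique (Fin 1) (Fin 2)).symm _ g (fun x => rfl)]
  simp [Equiv.funUnique, Fin.sum_univ_two]
  rfl

lemma irr_sup2 (f : Fin 2 → ℝ) :
    Finset.univ.sup' Finset.univ_nonempty f = max (f 0) (f 1) := by
  apply le_antisymm
  · exact Finset.sup'_le _ _ fun b _ => by fin_cases b; exacts [le_max_left _ _, le_max_right _ _]
  · exact max_le (Finset.le_sup' f (mem_univ 0)) (Finset.le_sup' f (mem_univ 1))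

lemma irr_EUmat (σ : ∀ _ : Fin 1, Fin 2 → ℝ) (h1 : σ 0 0 + σ 0 1 = 1) (a : Fin 2) (θ : Fin 3) :
    EUmat IrrU σ 0 a θ = IrrU 0 (fun _ => a) θ := by
  have hb : ∀ b : ∀ _ : Fin 1, Fin 2, Function.update b 0 a = fun _ => a := by
    intro b; funext j; fin_cases j; simp
  unfold EUmat
  rw [irr_sum_pi12]
  simp only [hb, piProb, Fin.prod_univ_one]
  linear_combination (IrrU 0 (fun _ => a) θ) * h1

lemma irr_ERmat (σ : ∀ _ : Fin 1, Fin 2 → ℝ) (h1 : σ 0 0 + σ 0 1 = 1) (a : Fin 2) (θ : Fin 3) :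
    ERmat IrrU σ 0 a θ = !![(0:ℝ), 0, 1; 1, 0, 0] a θ := by
  unfold ERmat
  rw [irr_sup2, irr_EUmat σ h1, irr_EUmat σ h1, irr_EUmat σ h1]
  fin_cases a <;> fin_cases θ <;>
    norm_num [IrrU, Matrix.cons_val_zero, Matrix.cons_val_one, Matrix.head_cons]

lemma irr_EUact (σ : ∀ _ : Fin 1, Fin 2 → ℝ) (π : Fin 1 → Fin 3 → ℝ)
    (h1 : σ 0 0 + σ 0 1 = 1) (a : Fin 2) :
    EUact IrrU σ π 0 a = ![π 0 0, π 0 2] a := by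
  unfold EUact
  rw [Fin.sum_univ_three, irr_EUmat σ h1, irr_EUmat σ h1, irr_EUmat σ h1]
  fin_cases a <;>
    norm_num [IrrU, Matrix.cons_val_zero, Matrix.cons_val_one, Matrix.head_cons, Matrix.cons_val_two, Matrix.tail_cons]

lemma irr_EUtot (σ : ∀ _ : Fin 1, Fin 2 → ℝ) (π : Fin 1 → Fin 3 → ℝ)
    (h1 : σ 0 0 + σ 0 1 = 1) :
    EUtot IrrU σ π 0 = π 0 0 * σ 0 0 + π 0 2 * σ 0 1 := by
  unfold EUtot
  rw [Fin.sum_univ_two, irr_EUact σ π h1, irr_EUact σ π h1]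
  norm_num [Matrix.cons_val_zero, Matrix.cons_val_one, Matrix.head_cons]

lemma irr_ERparam (σ : ∀ _ : Fin 1, Fin 2 → ℝ) (h1 : σ 0 0 + σ 0 1 = 1) (θ : Fin 3) :
    ERparam IrrU σ 0 θ = ![σ 0 1, 0, σ 0 0] θ := by
  unfold ERparam
  rw [Fin.sum_univ_two, irr_ERmat σ h1, irr_ERmat σ h1]
  fin_cases θ <;>
    norm_num [Matrix.cons_val_zero, Matrix.cons_val_one, Matrix.head_cons]

lemma irr_ERtot (σ : ∀ _ : Fin 1, Fin 2 → ℝ) (π : Fin 1 → Fin 3 → ℝ)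
    (h1 : σ 0 0 + σ 0 1 = 1) :
    ERtot IrrU σ π 0 = σ 0 1 * π 0 0 + σ 0 0 * π 0 2 := by
  unfold ERtot
  rw [Fin.sum_univ_three, irr_ERparam σ h1, irr_ERparam σ h1, irr_ERparam σ h1]
  norm_num [Matrix.cons_val_zero, Matrix.cons_val_one, Matrix.head_cons, Matrix.cons_val_two, Matrix.tail_cons]

end IrrAux

/-- the single-player game above has a unique extended equilibrium,
`σ*₁ = (1/2,1/2)`, `π*₁ = (1/2,0,1/2)`; in particular the equilibrium prior assigns
probability zero to the middle state `C`. -/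


theorem irregular_prior_unique_equilibrium :
    (∀ (σ : ∀ _ : Fin 1, Fin 2 → ℝ) (π : Fin 1 → Fin 3 → ℝ),
      ((∀ i, IsDist (σ i)) ∧ (∀ i, IsDist (π i)) ∧ ExtendedEquilibrium IrrU σ π) ↔
        (σ = Irrσ ∧ π = Irrπ)) ∧
    Irrπ 0 1 = 0 := by
  constructor
  · intro σ π
    constructor
    · rintro ⟨hσ, hπ, hE, hR⟩
      have hs0 : 0 ≤ σ 0 0 := (hσ 0).1 0
      have hs1 : 0 ≤ σ 0 1 := (hσ 0).1 1
      have hssum : σ 0 0 + σ 0 1 = 1 := by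
        have := (hσ 0).2; rwa [Fin.sum_univ_two] at this
      have hp0 : 0 ≤ π 0 0 := (hπ 0).1 0
      have hp1 : 0 ≤ π 0 1 := (hπ 0).1 1
      have hp2 : 0 ≤ π 0 2 := (hπ 0).1 2
      have hpsum : π 0 0 + π 0 1 + π 0 2 = 1 := by
        have := (hπ 0).2; rwa [Fin.sum_univ_three] at this
      set s := σ 0 0 with hs
      set t := σ 0 1 with ht
      set p := π 0 0 with hpd
      set q := π 0 1 with hqd
      set r := π 0 2 with hrd
      -- extract the four inequalities
      have A1 : p * s + r * t ≥ p := by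
        have := hE 0 0
        rwa [irr_EUtot σ π hssum, irr_EUact σ π hssum] at this
      have A2 : p * s + r * t ≥ r := by
        have := hE 0 1
        rwa [irr_EUtot σ π hssum, irr_EUact σ π hssum] at this
      have B1 : t * p + s * r ≥ t := by
        have := hR 0 0
        rwa [irr_ERtot σ π hssum, irr_ERparam σ hssum] at this
      have B3 : t * p + s * r ≥ s := by
        have := hR 0 2
        rwa [irr_ERtot σ π hssum, irr_ERparam σ hssum] at this
      -- derive the unique solution
      have h1 : p * t ≤ r * t := by nlinarith [A1]
      have h2 : r * s ≤ p * s := by nlinarith [A2]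
      have h3 : t * q + t * r ≤ s * r := by nlinarith [B1]
      have h4 : s * q + s * p ≤ t * p := by nlinarith [B3]
      have hq : q = 0 := by nlinarith [h1, h2, h3, h4]
      have hspos : 0 < s := by
        rcases lt_or_eq_of_le hs0 with h | h
        · exact h
        · exfalso
          have ht1 : t = 1 := by linarith
          nlinarith [h1, h3]
      have htpos : 0 < t := by
        rcases lt_or_eq_of_le hs1 with h | h
        · exact h
        · exfalso
          have hs1' : s = 1 := by linarith
          nlinarith [h2, h4]
      have hpr : p = r := le_antisymm ((mul_le_mul_iff_of_pos_right htpos).mp h1)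
        ((mul_le_mul_iff_of_pos_right hspos).mp h2)
      have hpv : p = 1 / 2 := by linarith
      have hrv : r = 1 / 2 := by linarith
      have e1 : t * q = 0 := by rw [hq, mul_zero]
      have e2 : s * q = 0 := by rw [hq, mul_zero]
      have e3 : t * r = t / 2 := by rw [hrv]; ring
      have e4 : s * r = s / 2 := by rw [hrv]; ring
      have e5 : t * p = t / 2 := by rw [hpv]; ring
      have e6 : s * p = s / 2 := by rw [hpv]; ring
      have hsv : s = 1 / 2 := by linarith
      have htv : t = 1 / 2 := by linarith
      constructor
      · funext i a
        have hi : i = 0 := Subsingleton.elim i 0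
        subst hi
        fin_cases a <;> simp [Irrσ] <;> linarith
      · funext i θ
        have hi : i = 0 := Subsingleton.elim i 0
        subst hi
        fin_cases θ <;> simp [Irrπ] <;> linarith
    · rintro ⟨rfl, rfl⟩
      have h1 : Irrσ 0 0 + Irrσ 0 1 = 1 := by norm_num [Irrσ]
      refine ⟨fun i => ⟨fun x => by fin_cases x <;> norm_num [Irrσ],
          by rw [Fin.sum_univ_two]; norm_num [Irrσ]⟩,
        fun i => ⟨fun x => by fin_cases x <;> norm_num [Irrπ],
          by rw [Fin.sum_univ_three]; norm_num [Irrπ, Matrix.cons_val_two, Matrix.tail_cons]⟩, ?_, ?_⟩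
      · intro i a
        have hi : i = 0 := Subsingleton.elim i 0
        subst hi
        rw [irr_EUtot _ _ h1, irr_EUact _ _ h1]
        fin_cases a <;> norm_num [Irrσ, Irrπ, Matrix.cons_val_two, Matrix.tail_cons]
      · intro i θ
        have hi : i = 0 := Subsingleton.elim i 0
        subst hi
        rw [irr_ERtot _ _ h1, irr_ERparam _ h1]
        fin_cases θ <;> norm_num [Irrσ, Irrπ, Matrix.cons_val_two, Matrix.tail_cons]
  · norm_num [Irrπ]
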